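/- Let (X,Y) be a BLM pair with parameter θ > 0, and let s, t be real numbers with s + t < θ such that E[exp(sX)], E[exp(tY)] and E[exp(sX+tY)] are finite. Then E[exp(sX+tY)] = ( (θ−s)·E[exp(sX)] + (θ−t)·E[exp(tY)] − θ ) / (θ−s−t). -/

import Mathlib

open MeasureTheory Real Set
open scoped ENNReal

/-- Marginal survival function `x ↦ P(X > x)`. -/
def survival {Ω : Type*} [MeasurableSpace Ω] (μ : Measure Ω) (X : Ω → ℝ) (x : ℝ) : ℝ :=
  (μ {ω | x < X ω}).toReal

/-- Joint survival function `(x,y) ↦ P(X > x, Y > y)`. -/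
def jointSurvival {Ω : Type*} [MeasurableSpace Ω] (μ : Measure Ω) (X Y : Ω → ℝ) (x y : ℝ) : ℝ :=
  (μ {ω | x < X ω ∧ y < Y ω}).toReal

/-- `(X,Y)` is a BLM pair with parameter `θ > 0`. -/
def IsBLM {Ω : Type*} [MeasurableSpace Ω] (μ : Measure Ω) (X Y : Ω → ℝ) (θ : ℝ) : Prop :=
  0 < θ ∧ μ {ω | 0 < X ω} = 1 ∧ μ {ω | 0 < Y ω} = 1 ∧
  (∀ x y : ℝ, 0 ≤ y → y ≤ x →
    jointSurvival μ X Y x y = Real.exp (-θ * y) * survival μ X (x - y)) ∧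
  (∀ x y : ℝ, 0 ≤ x → x ≤ y →
    jointSurvival μ X Y x y = Real.exp (-θ * x) * survival μ Y (y - x))

/-! ### Auxiliary lemmas -/

lemma blm_int_exp_Ioo (c a : ℝ) (hc : c ≠ 0) (ha : 0 < a) :
    ∫ x in Ioo (0:ℝ) a, Real.exp (c*x) = (Real.exp (c*a) - 1)/c := by
  have hd : ∀ x ∈ uIcc (0:ℝ) a, HasDerivAt (fun x => Real.exp (c*x)/c) (Real.exp (c*x)) x := by
    intro x _
    have := ((hasDerivAt_id x).const_mul c).exp
    have h2 := this.div_const c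
    simp only [id] at h2
    convert h2 using 1
    · rfl
    · rfl
    · field_simp
  have hi : IntervalIntegrable (fun x => Real.exp (c*x)) volume 0 a :=
    (Real.continuous_exp.comp (continuous_const.mul continuous_id)).intervalIntegrable 0 a
  have := intervalIntegral.integral_eq_sub_of_hasDerivAt hd hi
  rw [← MeasureTheory.integral_Ioc_eq_integral_Ioo, ← intervalIntegral.integral_of_le ha.le]
  rw [this]
  simp [mul_zero, Real.exp_zero]
  ring

lemma blm_lint_exp_layer (c a : ℝ) (hc : c ≠ 0) (ha : 0 < a) :
    ∫⁻ x in Ioi (0:ℝ), (if x < a then ENNReal.ofReal (Real.exp (c*x)) else 0) =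
      ENNReal.ofReal ((Real.exp (c*a) - 1)/c) := by
  have h1 : ∀ x, (if x < a then ENNReal.ofReal (Real.exp (c*x)) else 0)
      = (Iio a).indicator (fun x => ENNReal.ofReal (Real.exp (c*x))) x := by
    intro x; by_cases h : x < a <;> simp [Set.indicator, h]
  simp_rw [h1]
  rw [lintegral_indicator measurableSet_Iio, Measure.restrict_restrict measurableSet_Iio]
  have : Iio a ∩ Ioi 0 = Ioo 0 a := by ext x; simp [and_comm]
  rw [this]
  have hint : IntegrableOn (fun x => Real.exp (c*x)) (Ioo 0 a) volume :=
    ((Real.continuous_exp.comp (continuous_const.mul continuous_id)).integrableOn_Icc).mono_set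
      Ioo_subset_Icc_self
  rw [← ofReal_integral_eq_lintegral_ofReal hint
      (Filter.Eventually.of_forall fun x => (Real.exp_pos _).le), blm_int_exp_Ioo c a hc ha]

lemma blm_exp_ratio_nonneg (c : ℝ) (hc : c ≠ 0) {z : ℝ} (hz : 0 < z) :
    0 ≤ (Real.exp (c*z) - 1)/c := by
  rcases lt_or_gt_of_ne hc with h | h
  · apply div_nonneg_of_nonpos _ h.le
    simp only [sub_nonpos]
    calc Real.exp (c * z) ≤ Real.exp 0 :=
          Real.exp_le_exp.mpr (mul_nonpos_of_nonpos_of_nonneg h.le hz.le)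
      _ = 1 := Real.exp_zero
  · apply div_nonneg _ h.le
    simp only [sub_nonneg]
    calc (1:ℝ) = Real.exp 0 := Real.exp_zero.symm
      _ ≤ Real.exp (c * z) := Real.exp_le_exp.mpr (mul_nonneg h.le hz.le)

lemma blm_ae_pos {Ω : Type*} [MeasurableSpace Ω] (μ : Measure Ω) [IsProbabilityMeasure μ]
    (Z : Ω → ℝ) (hZ : Measurable Z) (h0 : μ {ω | 0 < Z ω} = 1) : ∀ᵐ ω ∂μ, 0 < Z ω := by
  rw [ae_iff]
  have : {ω | ¬ 0 < Z ω} = {ω | 0 < Z ω}ᶜ := rfl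
  rw [this, measure_compl (measurableSet_lt measurable_const hZ) (measure_ne_top μ _), h0]
  simp

lemma blm_marginal {Ω : Type*} [MeasurableSpace Ω] (μ : Measure Ω) [IsProbabilityMeasure μ]
    (Z : Ω → ℝ) (hZ : Measurable Z) (h0 : μ {ω | 0 < Z ω} = 1) (c : ℝ) (hc : c ≠ 0)
    (hInt : Integrable (fun ω => Real.exp (c * Z ω)) μ) :
    ∫⁻ x in Ioi (0:ℝ), ENNReal.ofReal (Real.exp (c*x)) * μ {ω | x < Z ω} =
      ENNReal.ofReal ((∫ ω, Real.exp (c * Z ω) ∂μ - 1)/c) := by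
  have hae : ∀ᵐ ω ∂μ, 0 < Z ω := blm_ae_pos μ Z hZ h0
  have step1 : ∀ x : ℝ, ENNReal.ofReal (Real.exp (c*x)) * μ {ω | x < Z ω} =
      ∫⁻ ω, (if x < Z ω then ENNReal.ofReal (Real.exp (c*x)) else 0) ∂μ := by
    intro x
    rw [← lintegral_indicator_one (measurableSet_lt measurable_const hZ), ← lintegral_const_mul']
    · congr 1; ext ω; by_cases h : x < Z ω <;> simp [Set.indicator, h]
    · exact ENNReal.ofReal_ne_top
  simp_rw [step1]
  rw [lintegral_lintegral_swap]
  · have inner : ∀ᵐ ω ∂μ,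
        (∫⁻ x in Ioi (0:ℝ), (if x < Z ω then ENNReal.ofReal (Real.exp (c*x)) else 0))
        = ENNReal.ofReal ((Real.exp (c * Z ω) - 1)/c) := by
      filter_upwards [hae] with ω hω
      exact blm_lint_exp_layer c (Z ω) hc hω
    rw [lintegral_congr_ae inner]
    have hg : Integrable (fun ω => (Real.exp (c * Z ω) - 1)/c) μ :=
      ((hInt.sub (integrable_const 1)).div_const c)
    have hgnn : 0 ≤ᵐ[μ] fun ω => (Real.exp (c * Z ω) - 1)/c := by
      filter_upwards [hae] with ω hω
      exact blm_exp_ratio_nonneg c hc hω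
    rw [← ofReal_integral_eq_lintegral_ofReal hg hgnn]
    congr 1
    rw [integral_div, integral_sub hInt (integrable_const 1)]
    simp
  · apply Measurable.aemeasurable
    apply Measurable.ite
    · exact measurableSet_lt (measurable_fst) (hZ.comp measurable_snd)
    · exact (ENNReal.measurable_ofReal.comp
        (Real.measurable_exp.comp (measurable_const.mul measurable_fst)))
    · exact measurable_const

lemma blm_lint_exp_geom (a : ℝ) (ha : 0 < a) :
    ∫⁻ y in Ioi (0:ℝ), ENNReal.ofReal (Real.exp (-a*y)) = ENNReal.ofReal (1/a) := by
  have hi : IntegrableOn (fun y => Real.exp (-a*y)) (Ioi (0:ℝ)) volume :=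
    exp_neg_integrableOn_Ioi 0 ha
  rw [← ofReal_integral_eq_lintegral_ofReal hi
      (Filter.Eventually.of_forall fun x => (Real.exp_pos _).le)]
  congr 1
  have hd : ∀ x ∈ Ici (0:ℝ), HasDerivAt (fun y => -Real.exp (-a*y)/a) (Real.exp (-a*x)) x := by
    intro x _
    have := ((hasDerivAt_id x).const_mul (-a)).exp
    have h2 := (this.neg).div_const a
    simp only [id] at h2
    convert h2 using 1
    · rfl
    · rfl
    · rfl
    · field_simp
  have hlim : Filter.Tendsto (fun y => -Real.exp (-a*y)/a) Filter.atTop (nhds 0) := by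
    have h1 : Filter.Tendsto (fun y : ℝ => -a*y) Filter.atTop Filter.atBot :=
      Filter.Tendsto.const_mul_atTop_of_neg (neg_neg_iff_pos.mpr ha) Filter.tendsto_id
    have := (Real.tendsto_exp_atBot.comp h1).neg.div_const a
    simpa using this
  have key := MeasureTheory.integral_Ioi_of_hasDerivAt_of_tendsto' (a := (0:ℝ)) hd hi hlim
  rw [key]
  simp [Real.exp_zero]
  ring

lemma blm_lint_shift (y : ℝ) (f : ℝ → ℝ≥0∞) (hf : Measurable f) (S : Set ℝ)
    (hS : MeasurableSet S) :
    ∫⁻ x in S, f (x - y) = ∫⁻ u in (fun u => u + y) ⁻¹' S, f u := by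
  conv_lhs => rw [← (measurePreserving_add_right volume y).map_eq]
  rw [setLIntegral_map (f := fun x => f (x - y)) hS
    (hf.comp (measurable_id.sub measurable_const)) (measurable_add_const y)]
  simp

lemma blm_meas_surv {Ω : Type*} [MeasurableSpace Ω] (μ : Measure Ω) (Z : Ω → ℝ) :
    Measurable (fun u : ℝ => μ {ω | u < Z ω}) := by
  apply Antitone.measurable
  intro u v huv
  exact measure_mono (fun ω h => lt_of_le_of_lt huv h)

lemma blm_cross_expect {Ω : Type*} [MeasurableSpace Ω] (μ : Measure Ω) [IsProbabilityMeasure μ]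
    (X Y : Ω → ℝ) (hX : Measurable X) (hY : Measurable Y)
    (hX0 : μ {ω | 0 < X ω} = 1) (hY0 : μ {ω | 0 < Y ω} = 1)
    (s t : ℝ) (hs : s ≠ 0) (ht : t ≠ 0)
    (hq : Integrable (fun ω => (Real.exp (s*X ω) - 1)/s * ((Real.exp (t*Y ω) - 1)/t)) μ) :
    ∫⁻ p : ℝ × ℝ, ENNReal.ofReal (Real.exp (s*p.1 + t*p.2)) * μ {ω | p.1 < X ω ∧ p.2 < Y ω}
        ∂((volume.restrict (Ioi (0:ℝ))).prod (volume.restrict (Ioi (0:ℝ)))) =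
      ENNReal.ofReal (∫ ω, (Real.exp (s*X ω) - 1)/s * ((Real.exp (t*Y ω) - 1)/t) ∂μ) := by
  have haeX : ∀ᵐ ω ∂μ, 0 < X ω := blm_ae_pos μ X hX hX0
  have haeY : ∀ᵐ ω ∂μ, 0 < Y ω := blm_ae_pos μ Y hY hY0
  have step1 : ∀ p : ℝ × ℝ,
      ENNReal.ofReal (Real.exp (s*p.1 + t*p.2)) * μ {ω | p.1 < X ω ∧ p.2 < Y ω} =
      ∫⁻ ω, (if p.1 < X ω ∧ p.2 < Y ω then ENNReal.ofReal (Real.exp (s*p.1 + t*p.2)) else 0)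
        ∂μ := by
    intro p
    have hms : MeasurableSet {ω | p.1 < X ω ∧ p.2 < Y ω} :=
      (measurableSet_lt measurable_const hX).inter (measurableSet_lt measurable_const hY)
    rw [← lintegral_indicator_one hms, ← lintegral_const_mul']
    · congr 1; ext ω; by_cases h : p.1 < X ω ∧ p.2 < Y ω <;> simp [Set.indicator, h]
    · exact ENNReal.ofReal_ne_top
  simp_rw [step1]
  rw [lintegral_lintegral_swap]
  · have inner : ∀ᵐ ω ∂μ,
        (∫⁻ p : ℝ × ℝ, (if p.1 < X ω ∧ p.2 < Y ω then
            ENNReal.ofReal (Real.exp (s*p.1 + t*p.2)) else 0)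
          ∂((volume.restrict (Ioi (0:ℝ))).prod (volume.restrict (Ioi (0:ℝ)))))
        = ENNReal.ofReal ((Real.exp (s*X ω) - 1)/s * ((Real.exp (t*Y ω) - 1)/t)) := by
      filter_upwards [haeX, haeY] with ω hωX hωY
      have hsplit : ∀ p : ℝ × ℝ,
          (if p.1 < X ω ∧ p.2 < Y ω then ENNReal.ofReal (Real.exp (s*p.1 + t*p.2)) else 0)
          = (if p.1 < X ω then ENNReal.ofReal (Real.exp (s*p.1)) else 0) *
            (if p.2 < Y ω then ENNReal.ofReal (Real.exp (t*p.2)) else 0) := by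
        intro p
        by_cases h1 : p.1 < X ω <;> by_cases h2 : p.2 < Y ω <;>
          simp [h1, h2, Real.exp_add, ENNReal.ofReal_mul (Real.exp_pos _).le]
      simp_rw [hsplit]
      have g1m : AEMeasurable (fun x : ℝ => if x < X ω then ENNReal.ofReal (Real.exp (s*x)) else 0)
          (volume.restrict (Ioi (0:ℝ))) := by
        apply Measurable.aemeasurable
        exact Measurable.ite (measurableSet_lt measurable_id (measurable_const))
          (ENNReal.measurable_ofReal.comp (Real.measurable_exp.comp
            (measurable_const.mul measurable_id))) measurable_const
      have g2m : AEMeasurable (fun y : ℝ => if y < Y ω then ENNReal.ofReal (Real.exp (t*y)) else 0)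
          (volume.restrict (Ioi (0:ℝ))) := by
        apply Measurable.aemeasurable
        exact Measurable.ite (measurableSet_lt measurable_id (measurable_const))
          (ENNReal.measurable_ofReal.comp (Real.measurable_exp.comp
            (measurable_const.mul measurable_id))) measurable_const
      rw [lintegral_prod_mul g1m g2m]
      rw [blm_lint_exp_layer s (X ω) hs hωX, blm_lint_exp_layer t (Y ω) ht hωY,
        ← ENNReal.ofReal_mul (blm_exp_ratio_nonneg s hs hωX)]
    rw [lintegral_congr_ae inner]
    have hqnn : 0 ≤ᵐ[μ] fun ω => (Real.exp (s*X ω) - 1)/s * ((Real.exp (t*Y ω) - 1)/t) := by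
      filter_upwards [haeX, haeY] with ω hωX hωY
      exact mul_nonneg (blm_exp_ratio_nonneg s hs hωX) (blm_exp_ratio_nonneg t ht hωY)
    rw [← ofReal_integral_eq_lintegral_ofReal hq hqnn]
  · apply Measurable.aemeasurable
    apply Measurable.ite
    · exact ((measurableSet_lt (measurable_fst.comp measurable_fst)
        (hX.comp measurable_snd)).inter (measurableSet_lt
        (measurable_snd.comp measurable_fst) (hY.comp measurable_snd)))
    · exact ENNReal.measurable_ofReal.comp (Real.measurable_exp.comp
        ((measurable_const.mul (measurable_fst.comp measurable_fst)).add
          (measurable_const.mul (measurable_snd.comp measurable_fst))))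
    · exact measurable_const

lemma blm_cross_eval {Ω : Type*} [MeasurableSpace Ω] (μ : Measure Ω) [IsProbabilityMeasure μ]
    (X Y : Ω → ℝ) (hX : Measurable X) (hY : Measurable Y) (θ : ℝ)
    (h4 : ∀ x y : ℝ, 0 ≤ y → y ≤ x →
      jointSurvival μ X Y x y = Real.exp (-θ * y) * survival μ X (x - y))
    (h5 : ∀ x y : ℝ, 0 ≤ x → x ≤ y →
      jointSurvival μ X Y x y = Real.exp (-θ * x) * survival μ Y (y - x))
    (s t : ℝ) (hst : s + t < θ)
    (hJs : (∫⁻ u in Ioi (0:ℝ), ENNReal.ofReal (Real.exp (s*u)) * μ {ω | u < X ω}) ≠ ⊤)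
    (hJt : (∫⁻ u in Ioi (0:ℝ), ENNReal.ofReal (Real.exp (t*u)) * μ {ω | u < Y ω}) ≠ ⊤) :
    ∫⁻ p : ℝ × ℝ, ENNReal.ofReal (Real.exp (s*p.1 + t*p.2)) * μ {ω | p.1 < X ω ∧ p.2 < Y ω}
        ∂((volume.restrict (Ioi (0:ℝ))).prod (volume.restrict (Ioi (0:ℝ)))) =
      ((∫⁻ u in Ioi (0:ℝ), ENNReal.ofReal (Real.exp (s*u)) * μ {ω | u < X ω}) +
       (∫⁻ u in Ioi (0:ℝ), ENNReal.ofReal (Real.exp (t*u)) * μ {ω | u < Y ω})) *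
        ENNReal.ofReal (1/(θ - s - t)) := by
  set Js := ∫⁻ u in Ioi (0:ℝ), ENNReal.ofReal (Real.exp (s*u)) * μ {ω | u < X ω} with hJsdef
  set Jt := ∫⁻ u in Ioi (0:ℝ), ENNReal.ofReal (Real.exp (t*u)) * μ {ω | u < Y ω} with hJtdef
  set f : ℝ × ℝ → ℝ≥0∞ :=
    fun p => ENNReal.ofReal (Real.exp (s*p.1 + t*p.2)) * μ {ω | p.1 < X ω ∧ p.2 < Y ω}
    with hfdef
  have hfm : Measurable f := by
    apply Measurable.mul
    · exact ENNReal.measurable_ofReal.comp (Real.measurable_exp.comp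
        ((measurable_const.mul measurable_fst).add (measurable_const.mul measurable_snd)))
    · have hsm : MeasurableSet {q : (ℝ × ℝ) × Ω | q.1.1 < X q.2 ∧ q.1.2 < Y q.2} :=
        (measurableSet_lt (measurable_fst.comp measurable_fst) (hX.comp measurable_snd)).inter
          (measurableSet_lt (measurable_snd.comp measurable_fst) (hY.comp measurable_snd))
      exact measurable_measure_prodMk_left hsm
  have hθst : 0 < θ - s - t := by linarith
  -- split
  have hsplit : ∀ p : ℝ × ℝ, f p = (if p.2 ≤ p.1 then f p else 0) + (if p.1 < p.2 then f p else 0) := by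
    intro p
    rcases le_or_gt p.2 p.1 with h | h
    · simp [h, not_lt.mpr h]
    · simp [h, not_le.mpr h]
  rw [lintegral_congr hsplit]
  have hf1m : Measurable fun p : ℝ × ℝ => (if p.2 ≤ p.1 then f p else 0) :=
    Measurable.ite (measurableSet_le measurable_snd measurable_fst) hfm measurable_const
  have hf2m : Measurable fun p : ℝ × ℝ => (if p.1 < p.2 then f p else 0) :=
    Measurable.ite (measurableSet_lt measurable_fst measurable_snd) hfm measurable_const
  rw [lintegral_add_left hf1m]
  -- region 1 : y ≤ x
  have hK1 : ∫⁻ p : ℝ × ℝ, (if p.2 ≤ p.1 then f p else 0)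
      ∂((volume.restrict (Ioi (0:ℝ))).prod (volume.restrict (Ioi (0:ℝ)))) =
      Js * ENNReal.ofReal (1/(θ - s - t)) := by
    rw [lintegral_prod_symm _ hf1m.aemeasurable]
    have inner : ∀ y ∈ Ioi (0:ℝ),
        (∫⁻ x in Ioi (0:ℝ), (if y ≤ x then f (x, y) else 0)) =
          ENNReal.ofReal (Real.exp ((s+t-θ)*y)) * Js := by
      intro y hy
      have hind : ∀ x : ℝ, (if y ≤ x then f (x, y) else 0)
          = (Ici y).indicator (fun x => f (x, y)) x := by
        intro x; by_cases h : y ≤ x <;> simp [Set.indicator, h]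
      simp_rw [hind]
      rw [lintegral_indicator measurableSet_Ici, Measure.restrict_restrict measurableSet_Ici]
      have hIset : Ici y ∩ Ioi (0:ℝ) = Ici y :=
        Set.inter_eq_left.mpr (fun x hx => show (0:ℝ) < x from lt_of_lt_of_le hy hx)
      rw [hIset]
      have hvals : ∀ x ∈ Ici y, f (x, y) =
          ENNReal.ofReal (Real.exp ((s+t-θ)*y)) *
            ((fun u => ENNReal.ofReal (Real.exp (s*u)) * μ {ω | u < X ω}) (x - y)) := by
        intro x hx
        have hμ : μ {ω | x < X ω ∧ y < Y ω} =
            ENNReal.ofReal (Real.exp (-θ*y) * survival μ X (x - y)) := by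
          rw [← h4 x y hy.out.le hx.out]
          exact (ENNReal.ofReal_toReal (measure_ne_top μ _)).symm
        have hsv : ENNReal.ofReal (survival μ X (x - y)) = μ {ω | x - y < X ω} :=
          ENNReal.ofReal_toReal (measure_ne_top μ _)
        simp only [hfdef]
        rw [hμ, ENNReal.ofReal_mul (Real.exp_pos _).le, hsv]
        rw [← mul_assoc, ← mul_assoc, ← ENNReal.ofReal_mul (Real.exp_pos _).le,
          ← ENNReal.ofReal_mul (Real.exp_pos _).le, ← Real.exp_add, ← Real.exp_add]
        congr 2
        ring
      rw [setLIntegral_congr_fun measurableSet_Ici hvals]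
      rw [lintegral_const_mul' _ _ ENNReal.ofReal_ne_top]
      congr 1
      have hmX : Measurable (fun u : ℝ => ENNReal.ofReal (Real.exp (s*u)) * μ {ω | u < X ω}) := by
        exact ((ENNReal.measurable_ofReal.comp (Real.measurable_exp.comp
          (measurable_const.mul measurable_id))).mul (blm_meas_surv μ X))
      rw [blm_lint_shift y (fun u : ℝ => ENNReal.ofReal (Real.exp (s*u)) * μ {ω | u < X ω})
        hmX (Ici y) measurableSet_Ici]
      have hpre : (fun u => u + y) ⁻¹' (Ici y) = Ici (0:ℝ) := by
        ext u; simp [le_add_iff_nonneg_left]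
      rw [hpre, hJsdef, ← Measure.restrict_congr_set Ioi_ae_eq_Ici]
    rw [setLIntegral_congr_fun measurableSet_Ioi inner]
    rw [lintegral_mul_const' Js _ hJs]
    have hexp : ∀ y : ℝ, Real.exp ((s+t-θ)*y) = Real.exp (-(θ-s-t)*y) := by
      intro y; congr 1; ring
    simp_rw [hexp]
    rw [blm_lint_exp_geom (θ - s - t) hθst, mul_comm]
  -- region 2 : x < y
  have hK2 : ∫⁻ p : ℝ × ℝ, (if p.1 < p.2 then f p else 0)
      ∂((volume.restrict (Ioi (0:ℝ))).prod (volume.restrict (Ioi (0:ℝ)))) =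
      Jt * ENNReal.ofReal (1/(θ - s - t)) := by
    rw [lintegral_prod _ hf2m.aemeasurable]
    have inner : ∀ x ∈ Ioi (0:ℝ),
        (∫⁻ y in Ioi (0:ℝ), (if x < y then f (x, y) else 0)) =
          ENNReal.ofReal (Real.exp ((s+t-θ)*x)) * Jt := by
      intro x hx
      have hind : ∀ y : ℝ, (if x < y then f (x, y) else 0)
          = (Ioi x).indicator (fun y => f (x, y)) y := by
        intro y; by_cases h : x < y <;> simp [Set.indicator, h]
      simp_rw [hind]
      rw [lintegral_indicator measurableSet_Ioi, Measure.restrict_restrict measurableSet_Ioi]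
      have hIset : Ioi x ∩ Ioi (0:ℝ) = Ioi x :=
        Set.inter_eq_left.mpr (fun y hy => show (0:ℝ) < y from lt_trans hx hy)
      rw [hIset]
      have hvals : ∀ y ∈ Ioi x, f (x, y) =
          ENNReal.ofReal (Real.exp ((s+t-θ)*x)) *
            ((fun v => ENNReal.ofReal (Real.exp (t*v)) * μ {ω | v < Y ω}) (y - x)) := by
        intro y hy
        have hμ : μ {ω | x < X ω ∧ y < Y ω} =
            ENNReal.ofReal (Real.exp (-θ*x) * survival μ Y (y - x)) := by
          rw [← h5 x y hx.out.le hy.out.le]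
          exact (ENNReal.ofReal_toReal (measure_ne_top μ _)).symm
        have hsv : ENNReal.ofReal (survival μ Y (y - x)) = μ {ω | y - x < Y ω} :=
          ENNReal.ofReal_toReal (measure_ne_top μ _)
        simp only [hfdef]
        rw [hμ, ENNReal.ofReal_mul (Real.exp_pos _).le, hsv]
        rw [← mul_assoc, ← mul_assoc, ← ENNReal.ofReal_mul (Real.exp_pos _).le,
          ← ENNReal.ofReal_mul (Real.exp_pos _).le, ← Real.exp_add, ← Real.exp_add]
        congr 2
        ring
      rw [setLIntegral_congr_fun measurableSet_Ioi hvals]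
      rw [lintegral_const_mul' _ _ ENNReal.ofReal_ne_top]
      congr 1
      have hmY : Measurable (fun v : ℝ => ENNReal.ofReal (Real.exp (t*v)) * μ {ω | v < Y ω}) := by
        exact ((ENNReal.measurable_ofReal.comp (Real.measurable_exp.comp
          (measurable_const.mul measurable_id))).mul (blm_meas_surv μ Y))
      rw [blm_lint_shift x (fun v : ℝ => ENNReal.ofReal (Real.exp (t*v)) * μ {ω | v < Y ω})
        hmY (Ioi x) measurableSet_Ioi]
      have hpre : (fun u => u + x) ⁻¹' (Ioi x) = Ioi (0:ℝ) := by
        ext u; simp [lt_add_iff_pos_left]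
      rw [hpre, hJtdef]
    rw [setLIntegral_congr_fun measurableSet_Ioi inner]
    rw [lintegral_mul_const' Jt _ hJt]
    have hexp : ∀ x : ℝ, Real.exp ((s+t-θ)*x) = Real.exp (-(θ-s-t)*x) := by
      intro x; congr 1; ring
    simp_rw [hexp]
    rw [blm_lint_exp_geom (θ - s - t) hθst, mul_comm]
  rw [hK1, hK2, add_mul]

theorem blm_mgf {Ω : Type*} [MeasurableSpace Ω] (μ : Measure Ω)
    [IsProbabilityMeasure μ] (X Y : Ω → ℝ) (hX : Measurable X) (hY : Measurable Y)
    (θ : ℝ) (hBLM : IsBLM μ X Y θ) (s t : ℝ) (hst : s + t < θ)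
    (hMX : Integrable (fun ω => Real.exp (s * X ω)) μ)
    (hMY : Integrable (fun ω => Real.exp (t * Y ω)) μ)
    (hMXY : Integrable (fun ω => Real.exp (s * X ω + t * Y ω)) μ) :
    ∫ ω, Real.exp (s * X ω + t * Y ω) ∂μ =
      ((θ - s) * ∫ ω, Real.exp (s * X ω) ∂μ
        + (θ - t) * ∫ ω, Real.exp (t * Y ω) ∂μ - θ) / (θ - s - t) := by
  obtain ⟨hθ, hX0, hY0, h4, h5⟩ := hBLM
  by_cases hs : s = 0
  · subst hs
    have ht' : θ - t ≠ 0 := by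
      have : t < θ := by simpa using hst
      intro h; linarith
    simp only [zero_mul, zero_add, Real.exp_zero, MeasureTheory.integral_const, measure_univ,
      ENNReal.toReal_one, probReal_univ, smul_eq_mul, mul_one, sub_zero]
    rw [eq_div_iff ht']
    ring
  by_cases ht : t = 0
  · subst ht
    have hs' : θ - s ≠ 0 := by
      have : s < θ := by simpa using hst
      intro h; linarith
    simp only [zero_mul, add_zero, Real.exp_zero, MeasureTheory.integral_const, measure_univ,
      ENNReal.toReal_one, probReal_univ, smul_eq_mul, mul_one, sub_zero]
    rw [eq_div_iff hs']
    ring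
  -- main case
  have haeX : ∀ᵐ ω ∂μ, 0 < X ω := blm_ae_pos μ X hX hX0
  have haeY : ∀ᵐ ω ∂μ, 0 < Y ω := blm_ae_pos μ Y hY hY0
  set MX := ∫ ω, Real.exp (s * X ω) ∂μ with hMXdef
  set MY := ∫ ω, Real.exp (t * Y ω) ∂μ with hMYdef
  set MXY := ∫ ω, Real.exp (s * X ω + t * Y ω) ∂μ with hMXYdef
  have hθst : 0 < θ - s - t := by linarith
  -- the cross-product function and its integrability
  have hq_eq : (fun ω => (Real.exp (s*X ω) - 1)/s * ((Real.exp (t*Y ω) - 1)/t)) =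
      fun ω => (s*t)⁻¹ * (Real.exp (s*X ω + t*Y ω) - Real.exp (s*X ω) - Real.exp (t*Y ω) + 1) := by
    funext ω
    rw [Real.exp_add]
    field_simp
    ring
  have hq : Integrable (fun ω => (Real.exp (s*X ω) - 1)/s * ((Real.exp (t*Y ω) - 1)/t)) μ := by
    rw [hq_eq]
    exact (((hMXY.sub hMX).sub hMY).add (integrable_const 1)).const_mul _
  -- value of the cross integral
  have hQval : ∫ ω, (Real.exp (s*X ω) - 1)/s * ((Real.exp (t*Y ω) - 1)/t) ∂μ =
      (s*t)⁻¹ * (MXY - MX - MY + 1) := by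
    rw [hq_eq, integral_const_mul]
    congr 1
    have i1 : Integrable (fun ω => Real.exp (s * X ω + t * Y ω) - Real.exp (s * X ω)) μ :=
      hMXY.sub hMX
    have i2 : Integrable
        (fun ω => Real.exp (s * X ω + t * Y ω) - Real.exp (s * X ω) - Real.exp (t * Y ω)) μ :=
      i1.sub hMY
    rw [integral_add i2 (integrable_const 1), integral_sub i1 hMY, integral_sub hMXY hMX]
    simp [hMXdef, hMYdef, hMXYdef]
  -- marginal lintegrals
  have hJsval := blm_marginal μ X hX hX0 s hs hMX
  have hJtval := blm_marginal μ Y hY hY0 t ht hMY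
  have hJs : (∫⁻ u in Ioi (0:ℝ), ENNReal.ofReal (Real.exp (s*u)) * μ {ω | u < X ω}) ≠ ⊤ := by
    rw [hJsval]; exact ENNReal.ofReal_ne_top
  have hJt : (∫⁻ u in Ioi (0:ℝ), ENNReal.ofReal (Real.exp (t*u)) * μ {ω | u < Y ω}) ≠ ⊤ := by
    rw [hJtval]; exact ENNReal.ofReal_ne_top
  -- combine the two cross lemmas
  have hcross := blm_cross_expect μ X Y hX hY hX0 hY0 s t hs ht hq
  rw [blm_cross_eval μ X Y hX hY θ h4 h5 s t hst hJs hJt, hJsval, hJtval] at hcross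
  -- nonnegativity facts
  have hAs : 0 ≤ (MX - 1)/s := by
    have heq : (MX - 1)/s = ∫ ω, (Real.exp (s*X ω) - 1)/s ∂μ := by
      rw [integral_div, integral_sub hMX (integrable_const 1)]
      simp [hMXdef]
    rw [heq]
    apply integral_nonneg_of_ae
    filter_upwards [haeX] with ω hω
    exact blm_exp_ratio_nonneg s hs hω
  have hAt : 0 ≤ (MY - 1)/t := by
    have heq : (MY - 1)/t = ∫ ω, (Real.exp (t*Y ω) - 1)/t ∂μ := by
      rw [integral_div, integral_sub hMY (integrable_const 1)]
      simp [hMYdef]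
    rw [heq]
    apply integral_nonneg_of_ae
    filter_upwards [haeY] with ω hω
    exact blm_exp_ratio_nonneg t ht hω
  have hg : (0:ℝ) ≤ 1/(θ - s - t) := by positivity
  have hQnn : 0 ≤ ∫ ω, (Real.exp (s*X ω) - 1)/s * ((Real.exp (t*Y ω) - 1)/t) ∂μ := by
    apply integral_nonneg_of_ae
    filter_upwards [haeX, haeY] with ω hωX hωY
    exact mul_nonneg (blm_exp_ratio_nonneg s hs hωX) (blm_exp_ratio_nonneg t ht hωY)
  -- convert the ENNReal identity to a real identity
  have hcross' : (ENNReal.ofReal ((MX - 1)/s) + ENNReal.ofReal ((MY - 1)/t)) *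
      ENNReal.ofReal (1/(θ - s - t)) =
      ENNReal.ofReal (((MX - 1)/s + (MY - 1)/t) * (1/(θ - s - t))) := by
    rw [← ENNReal.ofReal_add hAs hAt, ← ENNReal.ofReal_mul (by linarith)]
  rw [hcross'] at hcross
  have hkey : ∫ ω, (Real.exp (s*X ω) - 1)/s * ((Real.exp (t*Y ω) - 1)/t) ∂μ =
      ((MX - 1)/s + (MY - 1)/t) * (1/(θ - s - t)) := by
    have := (ENNReal.ofReal_eq_ofReal_iff hQnn
      (mul_nonneg (by linarith) hg)).mp hcross.symm
    linarith [this]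
  rw [hQval] at hkey
  -- final algebra
  have hθst' : θ - s - t ≠ 0 := ne_of_gt hθst
  rw [eq_div_iff hθst']
  field_simp at hkey
  have hst0 : s * t ≠ 0 := mul_ne_zero hs ht
  have hkey2 : (MXY - MX - MY + 1) * (θ - s - t) = (MX - 1) * t + (MY - 1) * s := by
    have h' : ((MXY - MX - MY + 1) * (θ - s - t)) * (s * t) =
        ((MX - 1) * t + (MY - 1) * s) * (s * t) := by
      linear_combination (s * t) * hkey
    exact mul_right_cancel₀ hst0 h'
  linear_combination hkey2
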